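/- Let C₀ and M be real constants with C₀ ≠ 0. Let G : ℝ → ℝ be three times differentiable with G(t) > 0 and G'(t) > 0 for all t. Define a(t) = 4·C₀·G(t)/G'(t) (assumed nonvanishing and twice differentiable) and Φ(t) = M/a(t)² − (1/2)·(a''(t)/a(t) − (1/2)·(a'(t)/a(t))²). Let x : ℝ → ℝ be twice differentiable with x(t) > 0 for all t, satisfying x''(t) + Φ(t)·x(t) = G(t)/x(t)³ for all t. Define T(t) = (1/4)·log G(t), and let X : ℝ → ℝ be a twice differentiable function such that X(T(t)) = x(t)·G'(t)^{1/2}/G(t)^{3/4} for all t. Then for every t, X''(T(t)) + 2·X'(T(t)) + (1 + M/C₀²)·X(T(t)) = 16/X(T(t))³. -/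

import Mathlib

set_option maxHeartbeats 2000000 in
/-- Under the relation between `Φ` and `G` through `a = 4C₀G/G'`, the change of
variables `T = (1/4)log G`, `X = x (G')^{1/2}/G^{3/4}` renders the generalized
Ermakov–Pinney equation autonomous: `X'' + 2X' + (1 + M/C₀²)X = 16/X³`. -/
theorem reduction_to_autonomous
    (C₀ M : ℝ) (hC₀ : C₀ ≠ 0)
    (G : ℝ → ℝ) (hG : Differentiable ℝ G) (hG' : Differentiable ℝ (deriv G))
    (hG'' : Differentiable ℝ (deriv (deriv G)))
    (hGpos : ∀ t, G t > 0) (hG'pos : ∀ t, deriv G t > 0)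
    (a : ℝ → ℝ) (ha_def : ∀ t, a t = 4 * C₀ * G t / deriv G t)
    (hane : ∀ t, a t ≠ 0)
    (ha : Differentiable ℝ a) (ha' : Differentiable ℝ (deriv a))
    (Φ : ℝ → ℝ)
    (hΦ_def : ∀ t, Φ t = M / (a t) ^ 2
        - (1 / 2) * (deriv (deriv a) t / a t - (1 / 2) * (deriv a t / a t) ^ 2))
    (x : ℝ → ℝ) (hx : Differentiable ℝ x) (hx' : Differentiable ℝ (deriv x))
    (hxpos : ∀ t, x t > 0)
    (hxeq : ∀ t, deriv (deriv x) t + Φ t * x t = G t / (x t) ^ 3)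
    (T : ℝ → ℝ) (hT : ∀ t, T t = (1 / 4) * Real.log (G t))
    (X : ℝ → ℝ) (hX : Differentiable ℝ X) (hX' : Differentiable ℝ (deriv X))
    (hXx : ∀ t, X (T t) = x t * Real.sqrt (deriv G t) / (G t) ^ ((3 : ℝ) / 4)) :
    ∀ t, deriv (deriv X) (T t) + 2 * deriv X (T t)
        + (1 + M / C₀ ^ 2) * X (T t) = 16 / (X (T t)) ^ 3 := by
  -- basic nonvanishing facts
  have hGne0 : ∀ s, G s ≠ 0 := fun s => (hGpos s).ne'
  have hG1ne0 : ∀ s, deriv G s ≠ 0 := fun s => (hG'pos s).ne'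
  have hsqpos : ∀ s, 0 < Real.sqrt (deriv G s) := fun s => Real.sqrt_pos.2 (hG'pos s)
  have hsqne : ∀ s, Real.sqrt (deriv G s) ≠ 0 := fun s => (hsqpos s).ne'
  have h2sqne : ∀ s, 2 * Real.sqrt (deriv G s) ≠ 0 := fun s =>
    mul_ne_zero two_ne_zero (hsqne s)
  have hQpos : ∀ s, 0 < G s ^ ((3:ℝ)/4) := fun s => Real.rpow_pos_of_pos (hGpos s) _
  have hQne : ∀ s, G s ^ ((3:ℝ)/4) ≠ 0 := fun s => (hQpos s).ne'
  have hQ2ne : ∀ s, (G s ^ ((3:ℝ)/4)) ^ 2 ≠ 0 := fun s => pow_ne_zero 2 (hQne s)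
  -- derivative of T
  have hTeq : T = fun u => 1 / 4 * Real.log (G u) := funext hT
  have hTd : ∀ s, HasDerivAt T (1 / 4 * (deriv G s / G s)) s := by
    intro s
    rw [hTeq]
    exact HasDerivAt.const_mul (1/4 : ℝ) (((hG s).hasDerivAt).log (hGne0 s))
  -- derivative of the numerator x * sqrt (G')
  have hN : ∀ s, HasDerivAt (fun u => x u * Real.sqrt (deriv G u))
      (deriv x s * Real.sqrt (deriv G s)
        + x s * (deriv (deriv G) s / (2 * Real.sqrt (deriv G s)))) s := fun s =>
    ((hx s).hasDerivAt).mul (((hG' s).hasDerivAt).sqrt (hG1ne0 s))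
  -- derivative of the denominator G ^ (3/4)
  have hQ : ∀ s, HasDerivAt (fun u => G u ^ ((3:ℝ)/4))
      (deriv G s * ((3:ℝ)/4) * G s ^ ((3:ℝ)/4 - 1)) s := fun s =>
    ((hG s).hasDerivAt).rpow_const (Or.inl (hGne0 s))
  -- derivative of F = x * sqrt(G') / G^(3/4)
  have hF : ∀ s, HasDerivAt (fun u => x u * Real.sqrt (deriv G u) / G u ^ ((3:ℝ)/4))
      (((deriv x s * Real.sqrt (deriv G s)
          + x s * (deriv (deriv G) s / (2 * Real.sqrt (deriv G s)))) * G s ^ ((3:ℝ)/4)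
        - x s * Real.sqrt (deriv G s) * (deriv G s * ((3:ℝ)/4) * G s ^ ((3:ℝ)/4 - 1)))
        / (G s ^ ((3:ℝ)/4)) ^ 2) s := fun s => (hN s).div (hQ s) (hQne s)
  -- first key: deriv X (T s) explicitly
  have key1 : ∀ s, deriv X (T s) =
      (((deriv x s * Real.sqrt (deriv G s)
          + x s * (deriv (deriv G) s / (2 * Real.sqrt (deriv G s)))) * G s ^ ((3:ℝ)/4)
        - x s * Real.sqrt (deriv G s) * (deriv G s * ((3:ℝ)/4) * G s ^ ((3:ℝ)/4 - 1)))
        / (G s ^ ((3:ℝ)/4)) ^ 2) * (4 * G s / deriv G s) := by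
    intro s
    have h1 : HasDerivAt (fun u => X (T u))
        (deriv X (T s) * (1 / 4 * (deriv G s / G s))) s :=
      ((hX (T s)).hasDerivAt).comp s (hTd s)
    have h2 : HasDerivAt (fun u => X (T u))
        (((deriv x s * Real.sqrt (deriv G s)
          + x s * (deriv (deriv G) s / (2 * Real.sqrt (deriv G s)))) * G s ^ ((3:ℝ)/4)
        - x s * Real.sqrt (deriv G s) * (deriv G s * ((3:ℝ)/4) * G s ^ ((3:ℝ)/4 - 1)))
        / (G s ^ ((3:ℝ)/4)) ^ 2) s :=
      (hF s).congr_of_eventuallyEq (Filter.Eventually.of_forall fun u => hXx u)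
    have huniq := h1.unique h2
    have hstep : deriv X (T s) =
        deriv X (T s) * (1 / 4 * (deriv G s / G s)) * (4 * G s / deriv G s) := by
      have hg := hGne0 s; have hg1 := hG1ne0 s; field_simp
    rw [hstep, huniq]
  intro t
  -- second derivative of X along T : differentiate  s ↦ W1 s * (4 G s / G' s)
  have hsqd : HasDerivAt (fun u => Real.sqrt (deriv G u))
      (deriv (deriv G) t / (2 * Real.sqrt (deriv G t))) t :=
    ((hG' t).hasDerivAt).sqrt (hG1ne0 t)
  have hB2 : HasDerivAt (fun u => deriv (deriv G) u / (2 * Real.sqrt (deriv G u)))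
      ((deriv (deriv (deriv G)) t * (2 * Real.sqrt (deriv G t))
        - deriv (deriv G) t * (2 * (deriv (deriv G) t / (2 * Real.sqrt (deriv G t)))))
        / (2 * Real.sqrt (deriv G t)) ^ 2) t :=
    ((hG'' t).hasDerivAt).div (hsqd.const_mul 2) (h2sqne t)
  have hNd : HasDerivAt (fun u => deriv x u * Real.sqrt (deriv G u)
        + x u * (deriv (deriv G) u / (2 * Real.sqrt (deriv G u)))) _ t :=
    (((hx' t).hasDerivAt).mul hsqd).add (((hx t).hasDerivAt).mul hB2)
  have hQd : HasDerivAt (fun u => deriv G u * ((3:ℝ)/4) * G u ^ ((3:ℝ)/4 - 1)) _ t :=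
    (((hG' t).hasDerivAt).mul_const ((3:ℝ)/4)).mul
      (((hG t).hasDerivAt).rpow_const (p := (3:ℝ)/4 - 1) (Or.inl (hGne0 t)))
  have hW1d : HasDerivAt (fun u =>
      ((deriv x u * Real.sqrt (deriv G u)
          + x u * (deriv (deriv G) u / (2 * Real.sqrt (deriv G u)))) * G u ^ ((3:ℝ)/4)
        - x u * Real.sqrt (deriv G u) * (deriv G u * ((3:ℝ)/4) * G u ^ ((3:ℝ)/4 - 1)))
        / (G u ^ ((3:ℝ)/4)) ^ 2) _ t :=
    ((hNd.mul (hQ t)).sub ((hN t).mul hQd)).div ((hQ t).pow 2) (hQ2ne t)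
  have hHd : HasDerivAt (fun u =>
      (((deriv x u * Real.sqrt (deriv G u)
          + x u * (deriv (deriv G) u / (2 * Real.sqrt (deriv G u)))) * G u ^ ((3:ℝ)/4)
        - x u * Real.sqrt (deriv G u) * (deriv G u * ((3:ℝ)/4) * G u ^ ((3:ℝ)/4 - 1)))
        / (G u ^ ((3:ℝ)/4)) ^ 2) * (4 * G u / deriv G u)) _ t :=
    hW1d.mul ((((hG t).hasDerivAt).const_mul 4).div ((hG' t).hasDerivAt) (hG1ne0 t))
  have h1 : HasDerivAt (fun u => deriv X (T u))
      (deriv (deriv X) (T t) * (1 / 4 * (deriv G t / G t))) t :=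
    ((hX' (T t)).hasDerivAt).comp t (hTd t)
  have h2 : HasDerivAt (fun u => deriv X (T u)) _ t :=
    hHd.congr_of_eventuallyEq (Filter.Eventually.of_forall fun u => key1 u)
  have key2 := h1.unique h2
  -- explicit derivatives of a
  have hA : ∀ s, HasDerivAt (fun u => 4 * C₀ * G u / deriv G u)
      ((4 * C₀ * deriv G s * deriv G s - 4 * C₀ * G s * deriv (deriv G) s)
        / deriv G s ^ 2) s := fun s =>
    (((hG s).hasDerivAt).const_mul (4 * C₀)).div ((hG' s).hasDerivAt) (hG1ne0 s)
  have haD : ∀ s, HasDerivAt a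
      ((4 * C₀ * deriv G s * deriv G s - 4 * C₀ * G s * deriv (deriv G) s)
        / deriv G s ^ 2) s := fun s =>
    (hA s).congr_of_eventuallyEq (Filter.Eventually.of_forall fun u => ha_def u)
  have hda_fun : deriv a = fun s =>
      (4 * C₀ * deriv G s * deriv G s - 4 * C₀ * G s * deriv (deriv G) s)
        / deriv G s ^ 2 := funext fun s => (haD s).deriv
  have hda : deriv a t =
      (4 * C₀ * deriv G t * deriv G t - 4 * C₀ * G t * deriv (deriv G) t)
        / deriv G t ^ 2 := (haD t).deriv
  have hA1d : HasDerivAt (fun s =>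
      (4 * C₀ * deriv G s * deriv G s - 4 * C₀ * G s * deriv (deriv G) s)
        / deriv G s ^ 2) _ t :=
    (((((hG' t).hasDerivAt).const_mul (4 * C₀)).mul ((hG' t).hasDerivAt)).sub
      ((((hG t).hasDerivAt).const_mul (4 * C₀)).mul ((hG'' t).hasDerivAt))).div
      (((hG' t).hasDerivAt).pow 2) (pow_ne_zero 2 (hG1ne0 t))
  have hdda := ((ha' t).hasDerivAt).unique
    (hA1d.congr_of_eventuallyEq (Filter.Eventually.of_forall fun s => congrFun hda_fun s))
  -- supply the differential equation for x
  have hx2 : deriv (deriv x) t = G t / x t ^ 3 - Φ t * x t := by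
    have := hxeq t; linarith
  -- rewrite the goal into explicit form
  rw [hXx t, key1 t]
  have hstep2 : deriv (deriv X) (T t) =
      deriv (deriv X) (T t) * (1 / 4 * (deriv G t / G t)) * (4 * G t / deriv G t) := by
    have hg := hGne0 t; have hg1 := hG1ne0 t; field_simp
  rw [hstep2, key2, hx2, hΦ_def t, ha_def t, hda, hdda]
  beta_reduce
  simp only [Pi.mul_apply, Pi.sub_apply]
  -- replace rpow-terms by powers of P := G t ^ (1/4), and sqrt by R
  have e1 : G t ^ ((3:ℝ)/4) = (G t ^ ((1:ℝ)/4)) ^ (3:ℕ) := by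
    rw [← Real.rpow_natCast (G t ^ ((1:ℝ)/4)) 3, ← Real.rpow_mul (hGpos t).le]
    norm_num
  have e3 : G t ^ ((3:ℝ)/4 - 1 - 1) = ((G t ^ ((1:ℝ)/4)) ^ (5:ℕ))⁻¹ := by
    rw [← Real.rpow_natCast (G t ^ ((1:ℝ)/4)) 5, ← Real.rpow_mul (hGpos t).le,
      show ((3:ℝ)/4 - 1 - 1) = -((1:ℝ)/4 * 5) by norm_num, Real.rpow_neg (hGpos t).le]
    norm_num
  have e2 : G t ^ ((3:ℝ)/4 - 1) = (G t ^ ((1:ℝ)/4))⁻¹ := by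
    rw [show ((3:ℝ)/4 - 1) = -((1:ℝ)/4) by norm_num, Real.rpow_neg (hGpos t).le]
  rw [e1, e2, e3]
  set P := G t ^ ((1:ℝ)/4) with hPdef
  set R := Real.sqrt (deriv G t) with hRdef
  have hPpos : 0 < P := Real.rpow_pos_of_pos (hGpos t) _
  have hRpos : 0 < R := hsqpos t
  have hPne : P ≠ 0 := hPpos.ne'
  have hRne : R ≠ 0 := hRpos.ne'
  have hxne : x t ≠ 0 := (hxpos t).ne'
  have hR2 : deriv G t = R ^ 2 := (Real.sq_sqrt (hG'pos t).le).symm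
  have hGP : G t = P ^ 4 := by
    rw [hPdef, ← Real.rpow_natCast (G t ^ ((1:ℝ)/4)) 4, ← Real.rpow_mul (hGpos t).le]
    norm_num
  rw [hR2, hGP]
  have h4 : (P:ℝ) ^ 4 ≠ 0 := pow_ne_zero 4 hPne
  have h5 : (R:ℝ) ^ 2 ≠ 0 := pow_ne_zero 2 hRne
  field_simp
  ring
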